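/- Let k : ℝ → ℝ be a strictly concave continuous function with k(0) < 0 and k(λ)/λ → -∞ as λ → +∞, and let c* = inf_{λ>0} (-k(λ)/λ). Then: (1) for c = c*, the equation k(λ) + λc = 0 has exactly one solution λ > 0; (2) for every c > c*, the equation k(λ) + λc = 0 has exactly two solutions 0 < λ_c < Λ_c; (3) for c < c*, it has no positive solution. -/

import Mathlib

open Set Filter

private lemma concave_three (k : ℝ → ℝ) (hconc : StrictConcaveOn ℝ Set.univ k)
    (c a b d : ℝ) (hab : a < b) (hbd : b < d)
    (ha : k a + a * c = 0) (hd : k d + d * c = 0) : 0 < k b + b * c := by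
  have had : a < d := hab.trans hbd
  have hda : (0:ℝ) < d - a := by linarith
  set t := (d - b) / (d - a) with ht_def
  set s := (b - a) / (d - a) with hs_def
  have ht : 0 < t := div_pos (by linarith) hda
  have hs : 0 < s := div_pos (by linarith) hda
  have hts : t + s = 1 := by
    rw [ht_def, hs_def, ← add_div, div_eq_one_iff_eq hda.ne']
    ring
  have hkey := hconc.2 (Set.mem_univ a) (Set.mem_univ d) (ne_of_lt had) ht hs hts
  have hb : t * a + s * d = b := by
    rw [ht_def, hs_def]
    field_simp
    ring
  simp only [smul_eq_mul] at hkey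
  rw [hb] at hkey
  have heq : t * k a + s * k d = -(b * c) := by
    have hka : k a = -(a * c) := by linarith
    have hkd : k d = -(d * c) := by linarith
    rw [hka, hkd, ← hb]
    ring
  linarith

theorem stmt2
    (k : ℝ → ℝ) (hcont : Continuous k) (hconc : StrictConcaveOn ℝ Set.univ k)
    (h0 : k 0 < 0)
    (hsuper : Tendsto (fun l => k l / l) atTop atBot)
    (cstar : ℝ) (hcstar : cstar = sInf {y | ∃ l : ℝ, 0 < l ∧ y = -k l / l}) :
    (∃! l : ℝ, 0 < l ∧ k l + l * cstar = 0) ∧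
    (∀ c : ℝ, cstar < c →
      ∃ l₁ l₂ : ℝ, 0 < l₁ ∧ l₁ < l₂ ∧
        k l₁ + l₁ * c = 0 ∧ k l₂ + l₂ * c = 0 ∧
        ∀ l : ℝ, 0 < l → k l + l * c = 0 → l = l₁ ∨ l = l₂) ∧
    (∀ c : ℝ, c < cstar → ¬ ∃ l : ℝ, 0 < l ∧ k l + l * c = 0) := by
  set g : ℝ → ℝ := fun l => -k l / l with hg_def
  -- root equivalence
  have hroot : ∀ c l : ℝ, 0 < l → (k l + l * c = 0 ↔ g l = c) := by
    intro c l hl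
    simp only [hg_def]
    rw [div_eq_iff hl.ne']
    constructor <;> intro h <;> nlinarith
  -- g → +∞ near 0⁺
  have h1 : Tendsto g (nhdsWithin 0 (Ioi (0:ℝ))) atTop := by
    have hnk : Tendsto (fun l => -k l) (nhdsWithin 0 (Ioi (0:ℝ))) (nhds (-k 0)) :=
      (hcont.neg.tendsto 0).mono_left nhdsWithin_le_nhds
    have := Filter.Tendsto.pos_mul_atTop (by linarith : (0:ℝ) < -k 0) hnk tendsto_inv_nhdsGT_zero
    refine this.congr (fun l => ?_)
    rw [hg_def]
    simp [div_eq_mul_inv]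
  -- g → +∞ at +∞
  have h2 : Tendsto g atTop atTop := by
    have hneg : Tendsto (fun l => -(k l / l)) atTop atTop := tendsto_neg_atBot_atTop.comp hsuper
    refine hneg.congr (fun l => ?_)
    simp [hg_def, neg_div]
  -- continuity of g away from 0
  have hgcont : ∀ a b : ℝ, 0 < a → ContinuousOn g (Icc a b) := by
    intro a b ha
    apply ContinuousOn.div hcont.neg.continuousOn continuousOn_id
    intro x hx
    exact (lt_of_lt_of_le ha hx.1).ne'
  obtain ⟨δ, hδpos, hδ⟩ : ∃ δ > 0, ∀ l, 0 < l → l < δ → g 1 ≤ g l := by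
    have := (h1.eventually (eventually_ge_atTop (g 1)))
    rw [eventually_nhdsWithin_iff, Metric.eventually_nhds_iff] at this
    obtain ⟨ε, hε, hball⟩ := this
    refine ⟨ε, hε, fun l hl hlε => hball ?_ hl⟩
    simp [abs_of_pos hl, hlε]
  obtain ⟨R, hR⟩ : ∃ R : ℝ, ∀ l ≥ R, g 1 ≤ g l :=
    (h2.eventually (eventually_ge_atTop (g 1))).exists_forall_of_atTop
  set ε := min (δ/2) 1 with hε_def
  have hεpos : 0 < ε := lt_min (by linarith) one_pos
  have hε1 : ε ≤ 1 := min_le_right _ _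
  set R' := max R 1 with hR'_def
  have hR'1 : (1:ℝ) ≤ R' := le_max_right _ _
  obtain ⟨l₀, hl₀mem, hl₀min⟩ :=
    isCompact_Icc.exists_isMinOn (Set.nonempty_Icc.mpr (hε1.trans hR'1)) (hgcont ε R' hεpos)
  have hl₀pos : 0 < l₀ := lt_of_lt_of_le hεpos hl₀mem.1
  have h1mem : (1:ℝ) ∈ Icc ε R' := ⟨hε1, hR'1⟩
  -- l₀ is a global minimizer on (0,∞)
  have hglobal : ∀ l : ℝ, 0 < l → g l₀ ≤ g l := by
    intro l hl
    rcases le_or_gt ε l with h | h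
    · rcases le_or_gt l R' with h' | h'
      · exact hl₀min ⟨h, h'⟩
      · calc g l₀ ≤ g 1 := hl₀min h1mem
          _ ≤ g l := hR l (le_trans (le_max_left _ _) h'.le)
    · calc g l₀ ≤ g 1 := hl₀min h1mem
        _ ≤ g l := hδ l hl (lt_of_lt_of_le h (le_trans (min_le_left _ _) (by linarith)))
  -- cstar = g l₀
  have hcs : cstar = g l₀ := by
    rw [hcstar]
    apply le_antisymm
    · exact csInf_le ⟨g l₀, fun y ⟨l, hl, hy⟩ => hy ▸ hglobal l hl⟩ ⟨l₀, hl₀pos, rfl⟩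
    · exact le_csInf ⟨g l₀, l₀, hl₀pos, rfl⟩ (fun y ⟨l, hl, hy⟩ => hy ▸ hglobal l hl)
  -- from positivity of k m + m * cstar deduce g m < g l₀ (contradiction helper)
  have hposlt : ∀ m : ℝ, 0 < m → 0 < k m + m * cstar → False := by
    intro m hm hpos
    have hlt : g m < cstar := by
      show -k m / m < cstar
      rw [div_lt_iff₀ hm]
      nlinarith
    have := hglobal m hm
    rw [← hcs] at this
    linarith
  have hl₀root : k l₀ + l₀ * cstar = 0 := (hroot cstar l₀ hl₀pos).mpr hcs.symm
  refine ⟨⟨l₀, ⟨hl₀pos, hl₀root⟩, ?_⟩, ?_, ?_⟩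
  · -- uniqueness at c = cstar
    rintro l ⟨hl, hl0⟩
    by_contra hne
    rcases lt_or_gt_of_ne hne with h | h
    · exact hposlt ((l + l₀)/2) (by linarith)
        (concave_three k hconc cstar l ((l + l₀)/2) l₀ (by linarith) (by linarith) hl0 hl₀root)
    · exact hposlt ((l + l₀)/2) (by linarith)
        (concave_three k hconc cstar l₀ ((l + l₀)/2) l (by linarith) (by linarith) hl₀root hl0)
  · -- two roots for c > cstar
    intro c hc
    have hfl₀ : 0 < k l₀ + l₀ * c := by nlinarith
    have hf0 : k 0 + 0 * c < 0 := by simpa using h0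
    set f : ℝ → ℝ := fun l => k l + l * c with hf_def
    have hfc : Continuous f := by
      apply hcont.add (continuous_id.mul continuous_const)
    -- small root
    have hiv1 : (0:ℝ) ∈ Ioo (f 0) (f l₀) := ⟨hf0, hfl₀⟩
    obtain ⟨l₁, hl₁mem, hl₁⟩ := intermediate_value_Ioo hl₀pos.le hfc.continuousOn hiv1
    -- big root : find R₂ > l₀ with f R₂ < 0
    obtain ⟨R₂, hR₂⟩ : ∃ R₂ : ℝ, ∀ l ≥ R₂, k l / l ≤ -c - 1 :=
      (hsuper.eventually (eventually_le_atBot (-c - 1))).exists_forall_of_atTop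
    set R₃ := max R₂ (l₀ + 1) with hR₃_def
    have hR₃pos : 0 < R₃ := lt_of_lt_of_le (by linarith) (le_max_right _ _)
    have hfR₃ : f R₃ < 0 := by
      have hd := hR₂ R₃ (le_max_left _ _)
      have : k R₃ ≤ R₃ * (-c - 1) := by
        rw [div_le_iff₀ hR₃pos] at hd
        linarith [hd]
      simp only [hf_def]
      nlinarith
    have hl₀R₃ : l₀ ≤ R₃ := le_trans (by linarith) (le_max_right _ _)
    have hiv2 : (0:ℝ) ∈ Ioo (f R₃) (f l₀) := ⟨hfR₃, hfl₀⟩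
    obtain ⟨l₂, hl₂mem, hl₂⟩ := intermediate_value_Ioo' hl₀R₃ hfc.continuousOn hiv2
    have hl₁' : k l₁ + l₁ * c = 0 := hl₁
    have hl₂' : k l₂ + l₂ * c = 0 := hl₂
    refine ⟨l₁, l₂, hl₁mem.1, lt_trans hl₁mem.2 hl₂mem.1, hl₁', hl₂', ?_⟩
    -- uniqueness: at most two roots
    intro l hl hl0
    by_contra hne
    push_neg at hne
    obtain ⟨hne1, hne2⟩ := hne
    have hl₁l₂ : l₁ < l₂ := lt_trans hl₁mem.2 hl₂mem.1
    rcases lt_trichotomy l l₁ with h | h | h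
    · exact absurd hl₁' (concave_three k hconc c l l₁ l₂ h hl₁l₂ hl0 hl₂').ne'
    · exact hne1 h
    · rcases lt_trichotomy l l₂ with h' | h' | h'
      · exact absurd hl0 (concave_three k hconc c l₁ l l₂ h h' hl₁' hl₂').ne'
      · exact hne2 h'
      · exact absurd hl₂' (concave_three k hconc c l₁ l₂ l hl₁l₂ h' hl₁' hl0).ne'
  · -- no root for c < cstar
    rintro c hc ⟨l, hl, hl0⟩
    have : g l = c := (hroot c l hl).mp hl0
    have : cstar ≤ c := by
      rw [← this, hcs]
      exact hglobal l hl
    linarith
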